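/- Suppose H : ℝⁿ → ℝ is differentiable and ∇H is β-Lipschitz with 0 < β ≤ 1. Then for all vectors y, y′, z, g, g′ ∈ ℝⁿ: ⟨g′, z − y′⟩ − ⟨g, z − y⟩ ≤ ½‖g′ − ∇H(y′)‖² + ‖g − ∇H(y)‖² + H(y) − H(y′) + ((2β + 1)/2)‖y′ − y‖² + (3/2)‖y′ − z‖². -/

import Mathlib

open scoped RealInnerProductSpace

lemma smooth_descent {n : ℕ}
    (H : EuclideanSpace ℝ (Fin n) → ℝ)
    (H' : EuclideanSpace ℝ (Fin n) → EuclideanSpace ℝ (Fin n))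
    (β : ℝ) (hβ : 0 < β)
    (hdiff : ∀ u, HasGradientAt H (H' u) u)
    (hlip : ∀ u v, ‖H' u - H' v‖ ≤ β * ‖u - v‖)
    (a b : EuclideanSpace ℝ (Fin n)) :
    H b ≤ H a + ⟪H' a, b - a⟫ + β / 2 * ‖b - a‖ ^ 2 := by
  set d := b - a with hd
  have hline : ∀ t : ℝ, HasDerivAt (fun t : ℝ => a + t • d) d t := by
    intro t
    simpa using ((hasDerivAt_id t).smul_const d).const_add a
  have hφ : ∀ t : ℝ, HasDerivAt (fun t : ℝ => H (a + t • d)) ⟪H' (a + t • d), d⟫ t := by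
    intro t
    have h1 := (hasGradientAt_iff_hasFDerivAt.mp (hdiff (a + t • d))).comp_hasDerivAt t (hline t)
    exact h1
  set ψ : ℝ → ℝ := fun t => H (a + t • d) - t * ⟪H' a, d⟫ - β / 2 * ‖d‖ ^ 2 * t ^ 2 with hψdef
  have hψ : ∀ t : ℝ, HasDerivAt ψ (⟪H' (a + t • d), d⟫ - ⟪H' a, d⟫ - β * ‖d‖ ^ 2 * t) t := by
    intro t
    have h2 : HasDerivAt (fun t : ℝ => t * ⟪H' a, d⟫) ⟪H' a, d⟫ t := by
      simpa using (hasDerivAt_id t).mul_const (⟪H' a, d⟫)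
    have h3 : HasDerivAt (fun t : ℝ => β / 2 * ‖d‖ ^ 2 * t ^ 2) (β / 2 * ‖d‖ ^ 2 * (2 * t)) t := by
      simpa [mul_comm] using (hasDerivAt_pow 2 t).const_mul (β / 2 * ‖d‖ ^ 2)
    have := ((hφ t).sub h2).sub h3
    exact this.congr_deriv (by ring)
  have hanti : AntitoneOn ψ (Set.Icc 0 1) := by
    apply antitoneOn_of_deriv_nonpos (convex_Icc 0 1)
    · exact Continuous.continuousOn (by
        have : Continuous ψ := by
          have : Differentiable ℝ ψ := fun t => (hψ t).differentiableAt
          exact this.continuous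
        exact this)
    · intro t ht
      exact (hψ t).differentiableAt.differentiableWithinAt
    · intro t ht
      rw [interior_Icc] at ht
      rw [(hψ t).deriv]
      have h4 : ⟪H' (a + t • d) - H' a, d⟫ ≤ ‖H' (a + t • d) - H' a‖ * ‖d‖ :=
        real_inner_le_norm _ _
      have h5 : ‖H' (a + t • d) - H' a‖ ≤ β * (t * ‖d‖) := by
        have := hlip (a + t • d) a
        simpa [norm_smul, abs_of_pos ht.1] using this
      have hd0 : (0:ℝ) ≤ ‖d‖ := norm_nonneg _
      have : ⟪H' (a + t • d) - H' a, d⟫ ≤ β * ‖d‖ ^ 2 * t := by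
        calc ⟪H' (a + t • d) - H' a, d⟫ ≤ ‖H' (a + t • d) - H' a‖ * ‖d‖ := h4
        _ ≤ β * (t * ‖d‖) * ‖d‖ := by nlinarith
        _ = β * ‖d‖ ^ 2 * t := by ring
      have h6 : ⟪H' (a + t • d) - H' a, d⟫ = ⟪H' (a + t • d), d⟫ - ⟪H' a, d⟫ :=
        inner_sub_left _ _ _
      linarith [h6 ▸ this]
  have key := hanti (Set.mem_Icc.mpr ⟨le_refl 0, zero_le_one⟩)
    (Set.mem_Icc.mpr ⟨zero_le_one, le_refl 1⟩) zero_le_one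
  simp only [hψdef] at key
  have e1 : a + (1:ℝ) • d = b := by rw [one_smul, hd]; abel
  have e0 : a + (0:ℝ) • d = a := by simp
  rw [e1, e0] at key
  ring_nf at key
  linarith

/-- The cross-term estimate (eq. 16 in Appendix A.1) used in the proof of Lemma A.3:
for `H` differentiable with `β`-Lipschitz gradient (`0 < β ≤ 1`) and arbitrary
gradient estimates `g, g'` of `∇H(y), ∇H(y')`. -/
theorem stmt_3 {n : ℕ}
    (H : EuclideanSpace ℝ (Fin n) → ℝ)
    (H' : EuclideanSpace ℝ (Fin n) → EuclideanSpace ℝ (Fin n))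
    (β : ℝ) (hβ : 0 < β) (hβ1 : β ≤ 1)
    (hdiff : ∀ u, HasGradientAt H (H' u) u)
    (hlip : ∀ u v, ‖H' u - H' v‖ ≤ β * ‖u - v‖)
    (y y' z g g' : EuclideanSpace ℝ (Fin n)) :
    ⟪g', z - y'⟫ - ⟪g, z - y⟫
      ≤ (1/2) * ‖g' - H' y'‖ ^ 2 + ‖g - H' y‖ ^ 2 + H y - H y'
        + ((2 * β + 1)/2) * ‖y' - y‖ ^ 2 + (3/2) * ‖y' - z‖ ^ 2 := by
  set e' := g' - H' y' with he'
  set e := g - H' y with he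
  -- A1
  have A1 : ⟪e', z - y'⟫ ≤ (1/2) * ‖e'‖ ^ 2 + (1/2) * ‖z - y'‖ ^ 2 := by
    have h := norm_sub_sq_real e' (z - y')
    nlinarith [sq_nonneg ‖e' - (z - y')‖]
  -- A2
  have A2 : ⟪e, y - z⟫ ≤ ‖e‖ ^ 2 + (1/4) * ‖y - z‖ ^ 2 := by
    have h := norm_sub_sq_real ((2:ℝ) • e) (y - z)
    have h2 : ‖(2:ℝ) • e‖ = 2 * ‖e‖ := by simp [norm_smul]
    have h3 : ⟪(2:ℝ) • e, y - z⟫ = 2 * ⟪e, y - z⟫ := real_inner_smul_left _ _ _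
    rw [h2, h3] at h
    nlinarith [sq_nonneg ‖(2:ℝ) • e - (y - z)‖]
  -- A3
  have A3 : ‖y - z‖ ^ 2 ≤ 2 * ‖y' - y‖ ^ 2 + 2 * ‖y' - z‖ ^ 2 := by
    have h : y - z = (y' - z) - (y' - y) := by abel
    rw [h, norm_sub_sq_real (y' - z) (y' - y)]
    have hlow : -(‖y' - z‖ * ‖y' - y‖) ≤ ⟪y' - z, y' - y⟫ :=
      neg_le_of_abs_le (abs_real_inner_le_norm _ _)
    nlinarith [sq_nonneg (‖y' - z‖ - ‖y' - y‖)]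
  -- A4
  have A4 : ⟪H' y' - H' y, z - y'⟫ ≤ β/2 * ‖y' - y‖ ^ 2 + 1/2 * ‖z - y'‖ ^ 2 := by
    have h1 : ⟪H' y' - H' y, z - y'⟫ ≤ ‖H' y' - H' y‖ * ‖z - y'‖ := real_inner_le_norm _ _
    have h2 := hlip y' y
    nlinarith [norm_nonneg (z - y'), norm_nonneg (y' - y), sq_nonneg (‖y' - y‖ - ‖z - y'‖),
      mul_nonneg (norm_nonneg (y' - y)) (norm_nonneg (z - y')), sq_nonneg ‖z - y'‖]
  -- A5 (descent lemma)
  have A5 : ⟪H' y, y - y'⟫ ≤ H y - H y' + β/2 * ‖y' - y‖ ^ 2 := by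
    have h := smooth_descent H H' β hβ hdiff hlip y y'
    have h2 : ⟪H' y, y' - y⟫ = - ⟪H' y, y - y'⟫ := by
      rw [← inner_neg_right]; congr 1; abel
    rw [h2] at h
    linarith
  -- identity
  have hid : ⟪g', z - y'⟫ - ⟪g, z - y⟫
      = ⟪e', z - y'⟫ + ⟪e, y - z⟫ + ⟪H' y' - H' y, z - y'⟫ + ⟪H' y, y - y'⟫ := by
    simp only [he', he, inner_sub_left, inner_sub_right]
    ring
  rw [hid]
  rw [norm_sub_rev z y'] at A1 A4
  linarith
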